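/- Let b = (b_k)_{k ≥ 1} be a non-increasing sequence of positive numbers, 0 < p < q ≤ ∞, α = 1/p − 1/q, and σ_{n,q}(b) = (∑_{k=n}^∞ b_k^q)^{1/q}. Then there is a constant C = C(p,q) such that (∑_{n=1}^∞ (n^α σ_{n,q}(b))^p / n)^{1/p} ≤ C ‖b‖_{ℓ^p}. -/

import Mathlib

open ENNReal


lemma jk_tsum_rpow_le {ι : Type*} (f : ι → ℝ≥0∞) {c : ℝ} (hc : 0 < c) (hc1 : c ≤ 1) :
    (∑' i, f i) ^ c ≤ ∑' i, f i ^ c := by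
  have hmono : Monotone (fun x : ℝ≥0∞ => x ^ c) := fun x y h => ENNReal.rpow_le_rpow h hc.le
  rw [ENNReal.tsum_eq_iSup_sum,
    Monotone.map_iSup_of_continuousAt (ENNReal.continuous_rpow_const.continuousAt) hmono
      (by simp [ENNReal.zero_rpow_of_pos hc])]
  refine iSup_le fun s => ?_
  refine le_trans ?_ (ENNReal.sum_le_tsum s)
  classical
  induction s using Finset.cons_induction with
  | empty => simp [ENNReal.zero_rpow_of_pos hc]
  | cons a s ha ih =>
      rw [Finset.sum_cons, Finset.sum_cons]
      exact le_trans (ENNReal.rpow_add_le_add_rpow _ _ hc.le hc1) (add_le_add le_rfl ih)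

lemma jk_surj (m : ℕ) (hm : 0 < m) :
    Function.Surjective (fun z : (Σ i : ℕ, Fin (2 ^ i * m)) => (2 ^ z.1 - 1) * m + (z.2 : ℕ)) := by
  intro j
  set d := j / m with hd
  set i := Nat.log 2 (d + 1) with hi
  have h1 : 2 ^ i ≤ d + 1 := Nat.pow_log_le_self 2 (Nat.succ_ne_zero d)
  have h2 : d + 1 < 2 ^ (i + 1) := Nat.lt_pow_succ_log_self (by norm_num) _
  have hdm : d * m ≤ j := Nat.div_mul_le_self j m
  have hj : j < (d + 1) * m := (Nat.div_lt_iff_lt_mul hm).mp (Nat.lt_succ_self d)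
  have hlow : (2 ^ i - 1) * m ≤ j := le_trans (Nat.mul_le_mul_right m (by omega)) hdm
  have hup : j < (2 ^ i - 1) * m + 2 ^ i * m := by
    have h3 : (d + 1) * m ≤ (2 ^ (i + 1) - 1) * m := Nat.mul_le_mul_right m (by omega)
    have h4 : (2 ^ (i + 1) - 1) * m = (2 ^ i - 1) * m + 2 ^ i * m := by
      have : (2:ℕ) ^ (i+1) = 2 ^ i + 2 ^ i := by ring
      have h5 : (1:ℕ) ≤ 2 ^ i := Nat.one_le_two_pow
      rw [← Nat.add_mul]; congr 1; omega
    omega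
  exact ⟨⟨i, ⟨j - (2 ^ i - 1) * m, by omega⟩⟩, by simp; omega⟩

lemma jk_inj (i : ℕ) :
    Function.Injective (fun z : ℕ × Fin (2 ^ i) => 2 ^ i * z.1 + (z.2 : ℕ)) := by
  intro ⟨a, s⟩ ⟨b, t⟩ h
  simp only at h
  have hs := s.isLt
  have ht := t.isLt
  have hab : a = b := by
    have := congrArg (· / 2 ^ i) h
    simpa [Nat.mul_add_div (show 0 < 2 ^ i by positivity), Nat.div_eq_of_lt hs,
      Nat.div_eq_of_lt ht] using this
  subst hab
  have : (s : ℕ) = t := by omega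
  exact congrArg _ (Fin.ext this)

lemma jk_key {p r : ℝ} (hp : 0 < p) (hr : 0 < r) (hpr : p < r) (B : ℕ → ℝ≥0∞) (hB : Antitone B) :
    ∑' n : ℕ, (((n : ℝ≥0∞) + 1) ^ (1 / p - 1 / r) * (∑' j : ℕ, B (n + j) ^ r) ^ (1 / r)) ^ p /
        ((n : ℝ≥0∞) + 1) ≤
      (1 - (2 : ℝ≥0∞) ^ (p / r) * 2⁻¹)⁻¹ * ∑' k : ℕ, B k ^ p := by
  set T := ∑' k : ℕ, B k ^ p with hT
  have hpr0 : 0 < p / r := div_pos hp hr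
  have hprlt : p / r < 1 := (div_lt_one hr).mpr hpr
  -- Claim B : tail along arithmetic progressions
  have claimB : ∀ i : ℕ, ∑' n : ℕ, B (2 ^ i * n + (2 ^ i - 1)) ^ p ≤ T / 2 ^ i := by
    intro i
    have h2i0 : ((2 : ℝ≥0∞)) ^ i ≠ 0 := pow_ne_zero _ (by norm_num)
    have h2it : ((2 : ℝ≥0∞)) ^ i ≠ ⊤ := ENNReal.pow_ne_top (by norm_num)
    rw [ENNReal.le_div_iff_mul_le (Or.inl h2i0) (Or.inl h2it), ← ENNReal.tsum_mul_right]
    calc ∑' n : ℕ, B (2 ^ i * n + (2 ^ i - 1)) ^ p * 2 ^ i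
        ≤ ∑' n : ℕ, ∑' t : Fin (2 ^ i), B (2 ^ i * n + (t : ℕ)) ^ p := by
          refine ENNReal.tsum_le_tsum fun n => ?_
          rw [tsum_fintype]
          have hcard := Finset.card_nsmul_le_sum (Finset.univ : Finset (Fin (2 ^ i)))
            (fun t => B (2 ^ i * n + (t : ℕ)) ^ p) (B (2 ^ i * n + (2 ^ i - 1)) ^ p)
            (fun t _ => ENNReal.rpow_le_rpow (hB (by have := t.isLt; omega)) hp.le)
          refine le_trans (le_of_eq ?_) hcard
          rw [nsmul_eq_mul]
          simp [mul_comm]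
      _ = ∑' z : ℕ × Fin (2 ^ i), B (2 ^ i * z.1 + (z.2 : ℕ)) ^ p := by
          rw [ENNReal.tsum_prod']
      _ ≤ T := ENNReal.tsum_comp_le_tsum_of_injective (jk_inj i) (fun k => B k ^ p)
  -- Claim A : dyadic decomposition of the tail
  have claimA : ∀ n : ℕ, (∑' j : ℕ, B (n + j) ^ r) ≤
      ∑' i : ℕ, (2 : ℝ≥0∞) ^ i * ((n : ℝ≥0∞) + 1) * B (2 ^ i * n + (2 ^ i - 1)) ^ r := by
    intro n
    calc ∑' j : ℕ, B (n + j) ^ r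
        ≤ ∑' z : (Σ i : ℕ, Fin (2 ^ i * (n + 1))),
            B (n + ((2 ^ z.1 - 1) * (n + 1) + (z.2 : ℕ))) ^ r :=
          tsum_le_tsum_comp_of_surjective (jk_surj (n + 1) n.succ_pos) _
      _ = ∑' i : ℕ, ∑' t : Fin (2 ^ i * (n + 1)),
            B (n + ((2 ^ i - 1) * (n + 1) + (t : ℕ))) ^ r := ENNReal.tsum_sigma' _
      _ ≤ ∑' i : ℕ, (2 : ℝ≥0∞) ^ i * ((n : ℝ≥0∞) + 1) * B (2 ^ i * n + (2 ^ i - 1)) ^ r := by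
          refine ENNReal.tsum_le_tsum fun i => ?_
          rw [tsum_fintype]
          have hidx : ∀ t : Fin (2 ^ i * (n + 1)),
              B (n + ((2 ^ i - 1) * (n + 1) + (t : ℕ))) ≤ B (2 ^ i * n + (2 ^ i - 1)) := by
            intro t
            apply hB
            have he : 1 ≤ 2 ^ i := Nat.one_le_two_pow
            have ha : (2 ^ i - 1) * (n + 1) = (2 ^ i - 1) * n + (2 ^ i - 1) := by ring
            have hb : (2 ^ i - 1 + 1) * n = (2 ^ i - 1) * n + n := Nat.succ_mul _ _
            have hc : 2 ^ i - 1 + 1 = 2 ^ i := by omega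
            rw [hc] at hb
            rw [ha]
            linarith [Nat.zero_le (t : ℕ), hb]
          have hcard := Finset.sum_le_card_nsmul (Finset.univ : Finset (Fin (2 ^ i * (n + 1))))
            (fun t => B (n + ((2 ^ i - 1) * (n + 1) + (t : ℕ))) ^ r)
            (B (2 ^ i * n + (2 ^ i - 1)) ^ r)
            (fun t _ => ENNReal.rpow_le_rpow (hidx t) hr.le)
          refine le_trans hcard (le_of_eq ?_)
          rw [nsmul_eq_mul]
          congr 1
          simp only [Finset.card_univ, Fintype.card_fin]
          push_cast
          ring
  -- per-n estimate
  have key1 : ∀ n : ℕ,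
      (((n : ℝ≥0∞) + 1) ^ (1 / p - 1 / r) * (∑' j : ℕ, B (n + j) ^ r) ^ (1 / r)) ^ p /
          ((n : ℝ≥0∞) + 1) ≤
        ∑' i : ℕ, ((2 : ℝ≥0∞) ^ (p / r)) ^ i * B (2 ^ i * n + (2 ^ i - 1)) ^ p := by
    intro n
    set ν : ℝ≥0∞ := (n : ℝ≥0∞) + 1 with hν
    have hν0 : ν ≠ 0 := by simp [hν]
    have hνt : ν ≠ ⊤ := by
      simp only [hν]
      exact ENNReal.add_ne_top.mpr ⟨ENNReal.natCast_ne_top n, ENNReal.one_ne_top⟩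
    have e1 : (ν ^ (1 / p - 1 / r) * (∑' j : ℕ, B (n + j) ^ r) ^ (1 / r)) ^ p =
        ν ^ ((1 / p - 1 / r) * p) * (∑' j : ℕ, B (n + j) ^ r) ^ (p / r) := by
      rw [ENNReal.mul_rpow_of_nonneg _ _ hp.le, ← ENNReal.rpow_mul, ← ENNReal.rpow_mul,
        show 1 / r * p = p / r from by ring]
    rw [e1]
    have e3 : ∀ i : ℕ, ((2 : ℝ≥0∞) ^ i * ν * B (2 ^ i * n + (2 ^ i - 1)) ^ r) ^ (p / r) =
        ((2 : ℝ≥0∞) ^ i) ^ (p / r) * ν ^ (p / r) * B (2 ^ i * n + (2 ^ i - 1)) ^ p := by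
      intro i
      rw [ENNReal.mul_rpow_of_nonneg _ _ hpr0.le, ENNReal.mul_rpow_of_nonneg _ _ hpr0.le,
        ← ENNReal.rpow_mul, show r * (p / r) = p from by field_simp]
    have e2 : (∑' j : ℕ, B (n + j) ^ r) ^ (p / r) ≤
        ∑' i : ℕ, ((2 : ℝ≥0∞) ^ i) ^ (p / r) * ν ^ (p / r) * B (2 ^ i * n + (2 ^ i - 1)) ^ p := by
      refine le_trans (le_trans (ENNReal.rpow_le_rpow (claimA n) hpr0.le)
        (jk_tsum_rpow_le _ hpr0 hprlt.le)) (le_of_eq (tsum_congr fun i => e3 i))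
    calc ν ^ ((1 / p - 1 / r) * p) * (∑' j : ℕ, B (n + j) ^ r) ^ (p / r) / ν
        ≤ ν ^ ((1 / p - 1 / r) * p) *
            (∑' i : ℕ, ((2 : ℝ≥0∞) ^ i) ^ (p / r) * ν ^ (p / r) *
              B (2 ^ i * n + (2 ^ i - 1)) ^ p) / ν :=
          ENNReal.div_le_div_right (mul_le_mul_of_nonneg_left e2 zero_le') _
      _ = ∑' i : ℕ, ((2 : ℝ≥0∞) ^ (p / r)) ^ i * B (2 ^ i * n + (2 ^ i - 1)) ^ p := by
          rw [ENNReal.div_eq_inv_mul, ← ENNReal.tsum_mul_left, ← ENNReal.tsum_mul_left]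
          refine tsum_congr fun i => ?_
          have h2 : ((2 : ℝ≥0∞) ^ i) ^ (p / r) = ((2 : ℝ≥0∞) ^ (p / r)) ^ i := by
            rw [← ENNReal.rpow_natCast 2 i, ← ENNReal.rpow_mul,
              ← ENNReal.rpow_natCast ((2 : ℝ≥0∞) ^ (p / r)) i, ← ENNReal.rpow_mul, mul_comm]
          have hνc : ν ^ ((1 / p - 1 / r) * p) * ν ^ (p / r) * ν⁻¹ = 1 := by
            rw [← ENNReal.rpow_neg_one ν, ← ENNReal.rpow_add _ _ hν0 hνt,
              ← ENNReal.rpow_add _ _ hν0 hνt,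
              show (1 / p - 1 / r) * p + p / r + -1 = 0 from by field_simp; ring,
              ENNReal.rpow_zero]
          calc ν⁻¹ * (ν ^ ((1 / p - 1 / r) * p) *
                (((2 : ℝ≥0∞) ^ i) ^ (p / r) * ν ^ (p / r) * B (2 ^ i * n + (2 ^ i - 1)) ^ p))
              = (ν ^ ((1 / p - 1 / r) * p) * ν ^ (p / r) * ν⁻¹) *
                  (((2 : ℝ≥0∞) ^ i) ^ (p / r) * B (2 ^ i * n + (2 ^ i - 1)) ^ p) := by ring
            _ = ((2 : ℝ≥0∞) ^ (p / r)) ^ i * B (2 ^ i * n + (2 ^ i - 1)) ^ p := by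
                rw [hνc, one_mul, h2]
  -- sum up
  calc ∑' n : ℕ, (((n : ℝ≥0∞) + 1) ^ (1 / p - 1 / r) *
          (∑' j : ℕ, B (n + j) ^ r) ^ (1 / r)) ^ p / ((n : ℝ≥0∞) + 1)
      ≤ ∑' n : ℕ, ∑' i : ℕ, ((2 : ℝ≥0∞) ^ (p / r)) ^ i * B (2 ^ i * n + (2 ^ i - 1)) ^ p :=
        ENNReal.tsum_le_tsum key1
    _ = ∑' i : ℕ, ∑' n : ℕ, ((2 : ℝ≥0∞) ^ (p / r)) ^ i * B (2 ^ i * n + (2 ^ i - 1)) ^ p :=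
        ENNReal.tsum_comm
    _ = ∑' i : ℕ, ((2 : ℝ≥0∞) ^ (p / r)) ^ i * ∑' n : ℕ, B (2 ^ i * n + (2 ^ i - 1)) ^ p :=
        tsum_congr fun i => ENNReal.tsum_mul_left
    _ ≤ ∑' i : ℕ, ((2 : ℝ≥0∞) ^ (p / r)) ^ i * (T / 2 ^ i) :=
        ENNReal.tsum_le_tsum fun i => mul_le_mul_of_nonneg_left (claimB i) zero_le'
    _ = ∑' i : ℕ, ((2 : ℝ≥0∞) ^ (p / r) * 2⁻¹) ^ i * T := by
        refine tsum_congr fun i => ?_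
        rw [ENNReal.div_eq_inv_mul, ENNReal.inv_pow]
        ring
    _ = (∑' i : ℕ, ((2 : ℝ≥0∞) ^ (p / r) * 2⁻¹) ^ i) * T := ENNReal.tsum_mul_right
    _ = (1 - (2 : ℝ≥0∞) ^ (p / r) * 2⁻¹)⁻¹ * T := by rw [ENNReal.tsum_geometric]


/-- Let `b = (b_k)_{k ≥ 1}` be a non-increasing sequence of positive reals,
`0 < p < q ≤ ∞`, `α = 1/p − 1/q` and `σ_{n,q}(b) = (∑_{k=n}^∞ b_k^q)^{1/q}` (with the sup
interpretation for `q = ∞`). Then there is a constant `C = C(p,q)` with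
`(∑_{n=1}^∞ (n^α σ_{n,q}(b))^p / n)^{1/p} ≤ C ‖b‖_{ℓ^p}`.
The computation is carried out in `ℝ≥0∞` so that both sides are always defined. -/
theorem upper_jackson_estimate
    (p : ℝ) (hp : 0 < p) (q : ℝ≥0∞) (hpq : ENNReal.ofReal p < q) :
    ∃ C : ℝ, 0 < C ∧
      ∀ b : ℕ → ℝ, (∀ k, 1 ≤ k → 0 < b k) → (∀ k, 1 ≤ k → b (k + 1) ≤ b k) →
        (∑' n : ℕ,
            (((n : ℝ≥0∞) + 1) ^ (1 / p - 1 / q.toReal) *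
                (if q = ∞ then ⨆ j : ℕ, ENNReal.ofReal (b (n + 1 + j))
                  else (∑' j : ℕ, ENNReal.ofReal (b (n + 1 + j)) ^ q.toReal) ^ (1 / q.toReal))) ^ p /
              ((n : ℝ≥0∞) + 1)) ^ (1 / p) ≤
          ENNReal.ofReal C * (∑' k : ℕ, ENNReal.ofReal (b (k + 1)) ^ p) ^ (1 / p) := by
  have hν0 : ∀ n : ℕ, ((n : ℝ≥0∞) + 1) ≠ 0 := fun n => by simp
  have hνt : ∀ n : ℕ, ((n : ℝ≥0∞) + 1) ≠ ⊤ := fun n =>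
    ENNReal.add_ne_top.mpr ⟨ENNReal.natCast_ne_top n, ENNReal.one_ne_top⟩
  by_cases hq : q = ⊤
  · refine ⟨1, one_pos, fun b hbpos hbmono => ?_⟩
    have hstep : ∀ k j : ℕ, 1 ≤ k → b (k + j) ≤ b k := by
      intro k j hk
      induction j with
      | zero => exact le_refl _
      | succ j ih => exact le_trans (hbmono (k + j) (le_trans hk (Nat.le_add_right _ _))) ih
    have hsup : ∀ n : ℕ, (⨆ j : ℕ, ENNReal.ofReal (b (n + 1 + j))) = ENNReal.ofReal (b (n + 1)) := by
      intro n
      refine le_antisymm (iSup_le fun j => ENNReal.ofReal_le_ofReal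
        (hstep (n + 1) j (Nat.succ_le_succ (Nat.zero_le _))))
        (le_iSup (fun j => ENNReal.ofReal (b (n + 1 + j))) 0)
    subst hq
    simp only [reduceIte, hsup, ENNReal.toReal_top]
    have hbody : ∀ n : ℕ, (((n : ℝ≥0∞) + 1) ^ (1 / p - 1 / (0:ℝ)) * ENNReal.ofReal (b (n + 1))) ^ p /
        ((n : ℝ≥0∞) + 1) = ENNReal.ofReal (b (n + 1)) ^ p := by
      intro n
      rw [show (1:ℝ) / p - 1 / 0 = 1 / p from by norm_num,
        ENNReal.mul_rpow_of_nonneg _ _ hp.le, ← ENNReal.rpow_mul,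
        one_div_mul_cancel hp.ne', ENNReal.rpow_one, mul_comm, mul_div_assoc,
        ENNReal.div_self (hν0 n) (hνt n), mul_one]
    simp only [hbody]
    rw [ENNReal.ofReal_one, one_mul]
  · have hqpos : (0 : ℝ≥0∞) < q := lt_trans (ENNReal.ofReal_pos.mpr hp) hpq
    set r := q.toReal with hrdef
    have hr : 0 < r := ENNReal.toReal_pos hqpos.ne' hq
    have hpr : p < r := by
      have := ENNReal.toReal_strict_mono hq hpq
      rwa [ENNReal.toReal_ofReal hp.le] at this
    set K : ℝ≥0∞ := (1 - (2 : ℝ≥0∞) ^ (p / r) * 2⁻¹)⁻¹ with hK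
    have hρ : (2 : ℝ≥0∞) ^ (p / r) * 2⁻¹ < 1 := by
      have h1 : (2 : ℝ≥0∞) ^ (p / r) < (2 : ℝ≥0∞) ^ (1 : ℝ) :=
        ENNReal.rpow_lt_rpow_of_exponent_lt (by norm_num) (by norm_num)
          ((div_lt_one hr).mpr hpr)
      rw [ENNReal.rpow_one] at h1
      calc (2 : ℝ≥0∞) ^ (p / r) * 2⁻¹ < 2 * 2⁻¹ := by
            rw [mul_comm _ (2⁻¹ : ℝ≥0∞), mul_comm (2 : ℝ≥0∞) (2⁻¹)]
            exact ENNReal.mul_lt_mul_right (ENNReal.inv_ne_zero.mpr (by norm_num))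
              (ENNReal.inv_ne_top.mpr (by norm_num)) h1
        _ = 1 := ENNReal.mul_inv_cancel (by norm_num) (by norm_num)
    have hKt : K ≠ ⊤ := by
      rw [hK]
      exact ENNReal.inv_ne_top.mpr (fun h => (not_le.mpr hρ) (tsub_eq_zero_iff_le.mp h))
    have hKp : K ^ (1 / p) ≠ ⊤ := ENNReal.rpow_ne_top_of_nonneg (by positivity) hKt
    have hCpos : (0 : ℝ) < (K ^ (1 / p)).toReal + 1 := by positivity
    refine ⟨(K ^ (1 / p)).toReal + 1, hCpos, fun b hbpos hbmono => ?_⟩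
    simp only [if_neg hq]
    have hidx : ∀ n j : ℕ, b (n + 1 + j) = b (n + j + 1) := fun n j => by
      rw [Nat.add_right_comm]
    simp only [hidx]
    have hBanti : Antitone (fun k : ℕ => ENNReal.ofReal (b (k + 1))) :=
      antitone_nat_of_succ_le fun k => ENNReal.ofReal_le_ofReal
        (hbmono (k + 1) (Nat.succ_le_succ (Nat.zero_le _)))
    have hkey := jk_key hp hr hpr (fun k => ENNReal.ofReal (b (k + 1))) hBanti
    refine le_trans (ENNReal.rpow_le_rpow hkey (by positivity)) ?_
    rw [ENNReal.mul_rpow_of_nonneg _ _ (by positivity)]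
    refine mul_le_mul_of_nonneg_right ?_ zero_le'
    calc K ^ (1 / p) = ENNReal.ofReal ((K ^ (1 / p)).toReal) := (ENNReal.ofReal_toReal hKp).symm
      _ ≤ ENNReal.ofReal ((K ^ (1 / p)).toReal + 1) := ENNReal.ofReal_le_ofReal (by linarith)
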